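/- (Sandwich Lemma) Let P_in = conv{v_1,…,v_n} ⊆ ℝ^k and P_out = {x ∈ ℝ^k : a_i^T x ≤ b_i, 1 ≤ i ≤ m} be full-dimensional polytopes with P_in ⊆ P_out, and let S be the m×n matrix with S_{ij} = b_i − a_i^T v_j. If S has a nonnegative factorization S = TU with inner dimension r (T ≥ 0 with r columns, U ≥ 0 with r rows), then there exists a polytope P with P_in ⊆ P ⊆ P_out such that P is a linear projection of a polyhedron described by m equations and r nonnegativity constraints (hence extension complexity at most r). -/
import Mathlib


theorem sandwich_lemma_from_factorization
    (k m n r : ℕ)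
    (v : Fin n → (Fin k → ℝ)) (a : Fin m → (Fin k → ℝ)) (b : Fin m → ℝ)
    -- full-dimensionality of the polytopes
    (hfullin : (interior (convexHull ℝ (Set.range v))).Nonempty)
    (hfullout : (interior {x : Fin k → ℝ | ∀ i, (∑ j, a i j * x j) ≤ b i}).Nonempty)
    -- P_in ⊆ P_out
    (hsub : convexHull ℝ (Set.range v) ⊆ {x : Fin k → ℝ | ∀ i, (∑ j, a i j * x j) ≤ b i})
    (T : Matrix (Fin m) (Fin r) ℝ) (U : Matrix (Fin r) (Fin n) ℝ)
    (hT : ∀ i l, 0 ≤ T i l) (hU : ∀ l j, 0 ≤ U l j)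
    -- S = TU where S_{ij} = b_i − a_iᵀ v_j is the slack matrix
    (hfact : ∀ i j, b i - (∑ l, a i l * v j l) = ∑ l, T i l * U l j) :
    ∃ P : Set (Fin k → ℝ),
      convexHull ℝ (Set.range v) ⊆ P ∧
      P ⊆ {x : Fin k → ℝ | ∀ i, (∑ j, a i j * x j) ≤ b i} ∧
      P = {x : Fin k → ℝ | ∃ y : Fin r → ℝ, (∀ l, 0 ≤ y l) ∧
            ∀ i, (∑ j, a i j * x j) + (∑ l, T i l * y l) = b i} := by
  set P : Set (Fin k → ℝ) := {x : Fin k → ℝ | ∃ y : Fin r → ℝ, (∀ l, 0 ≤ y l) ∧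
            ∀ i, (∑ j, a i j * x j) + (∑ l, T i l * y l) = b i} with hP
  have hconv : Convex ℝ P := by
    intro x hx x' hx' s t hs ht hst
    obtain ⟨y, hy, hxy⟩ := hx
    obtain ⟨y', hy', hxy'⟩ := hx'
    refine ⟨fun l => s * y l + t * y' l,
      fun l => add_nonneg (mul_nonneg hs (hy l)) (mul_nonneg ht (hy' l)), fun i => ?_⟩
    have h1 := hxy i
    have h2 := hxy' i
    have e1 : (∑ j, a i j * (s • x + t • x') j)
        = s * (∑ j, a i j * x j) + t * (∑ j, a i j * x' j) := by
      rw [Finset.mul_sum, Finset.mul_sum, ← Finset.sum_add_distrib]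
      refine Finset.sum_congr rfl fun j _ => ?_
      simp only [Pi.add_apply, Pi.smul_apply, smul_eq_mul]
      ring
    have e2 : (∑ l, T i l * (s * y l + t * y' l))
        = s * (∑ l, T i l * y l) + t * (∑ l, T i l * y' l) := by
      rw [Finset.mul_sum, Finset.mul_sum, ← Finset.sum_add_distrib]
      exact Finset.sum_congr rfl fun l _ => by ring
    rw [e1, e2]
    linear_combination s * h1 + t * h2 + (b i) * hst
  have hmem : ∀ j, v j ∈ P := by
    intro j
    refine ⟨fun l => U l j, fun l => hU l j, fun i => ?_⟩
    have := hfact i j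
    linarith
  refine ⟨P, ?_, ?_, rfl⟩
  · exact convexHull_min (Set.range_subset_iff.mpr hmem) hconv
  · intro x hx i
    obtain ⟨y, hy, hxy⟩ := hx
    have hn : 0 ≤ ∑ l, T i l * y l :=
      Finset.sum_nonneg fun l _ => mul_nonneg (hT i l) (hy l)
    have := hxy i
    linarith
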